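/- Let p, q, r, s be four points of ℙ¹(ℝ)×ℙ¹(ℝ) such that their images under the first projection are pairwise distinct, their images under the second projection are pairwise distinct, and there is no nonzero real bilinear form c₀₀u₀v₀+c₀₁u₀v₁+c₁₀u₁v₀+c₁₁u₁v₁ vanishing at all four points. Then there exist A, B ∈ GL₂(ℝ) and μ₁, μ₂ ∈ ℝ∖{0,1} with μ₁ ≠ μ₂ such that the automorphism (x,y) ↦ (A·x, B·y) of ℙ¹(ℝ)×ℙ¹(ℝ) maps p to ([1:0],[1:0]), q to ([0:1],[0:1]), r to ([1:1],[1:1]) and s to ([1:μ₁],[1:μ₂]). -/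

import Mathlib

noncomputable section

open ComplexConjugate

/-- The projective line `ℙ¹(K)` over a field `K`, i.e. the projectivization of `K²`. -/
abbrev Pone (K : Type) [Field K] : Type := Projectivization K (Fin 2 → K)

theorem vec_ne_zero {K : Type} [Field K] {a b : K} (h : a ≠ 0 ∨ b ≠ 0) :
    (![a, b] : Fin 2 → K) ≠ 0 := by
  intro hv
  rcases h with h | h
  · exact h (by simpa using congrFun hv 0)
  · exact h (by simpa using congrFun hv 1)

/-- The point `[a : b]` of the projective line `ℙ¹(K)`. -/
def pt {K : Type} [Field K] (a b : K) (h : a ≠ 0 ∨ b ≠ 0) : Pone K :=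
  Projectivization.mk K ![a, b] (vec_ne_zero h)

theorem mulVecLin_injective {K : Type} [Field K] (A : GL (Fin 2) K) :
    Function.Injective ⇑(Matrix.mulVecLin (A : Matrix (Fin 2) (Fin 2) K)) := by
  intro v w hvw
  have h1 : (A : Matrix (Fin 2) (Fin 2) K).mulVec v
      = (A : Matrix (Fin 2) (Fin 2) K).mulVec w := hvw
  have h2 : ((↑(A⁻¹) : Matrix (Fin 2) (Fin 2) K) * (A : Matrix (Fin 2) (Fin 2) K)).mulVec v
      = ((↑(A⁻¹) : Matrix (Fin 2) (Fin 2) K) * (A : Matrix (Fin 2) (Fin 2) K)).mulVec w := by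
    rw [← Matrix.mulVec_mulVec, ← Matrix.mulVec_mulVec, h1]
  rw [Units.inv_mul, Matrix.one_mulVec, Matrix.one_mulVec] at h2
  exact h2

/-- The action of `A ∈ GL₂(K)` on the projective line `ℙ¹(K)`: `A·[v] = [A v]`. -/
def glMap {K : Type} [Field K] (A : GL (Fin 2) K) : Pone K → Pone K :=
  Projectivization.map (Matrix.mulVecLin (A : Matrix (Fin 2) (Fin 2) K)) (mulVecLin_injective A)

/-- Four points of `ℙ¹(K) × ℙ¹(K)` are in general position: their images under the first
projection are pairwise distinct, their images under the second projection are pairwise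
distinct, and there is no nonzero bilinear form
`c₀₀u₀v₀ + c₀₁u₀v₁ + c₁₀u₁v₀ + c₁₁u₁v₁` vanishing at all four points (i.e. no curve of
bidegree `(1,1)` through all four points). -/
def GenPos {K : Type} [Field K] (P₁ P₂ P₃ P₄ : Pone K × Pone K) : Prop :=
  [P₁.1, P₂.1, P₃.1, P₄.1].Pairwise (· ≠ ·) ∧
  [P₁.2, P₂.2, P₃.2, P₄.2].Pairwise (· ≠ ·) ∧
  ∀ c₀₀ c₀₁ c₁₀ c₁₁ : K,
    (∀ P ∈ [P₁, P₂, P₃, P₄],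
      c₀₀ * P.1.rep 0 * P.2.rep 0 + c₀₁ * P.1.rep 0 * P.2.rep 1 +
        c₁₀ * P.1.rep 1 * P.2.rep 0 + c₁₁ * P.1.rep 1 * P.2.rep 1 = 0) →
    c₀₀ = 0 ∧ c₀₁ = 0 ∧ c₁₀ = 0 ∧ c₁₁ = 0

/-- The ruling-preserving map `(x, y) ↦ (A·x, B·y)` of `ℙ¹(ℝ) × ℙ¹(ℝ)`. -/
def mapAB (A B : GL (Fin 2) ℝ) (P : Pone ℝ × Pone ℝ) : Pone ℝ × Pone ℝ :=
  (glMap A P.1, glMap B P.2)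

section Helpers

open Matrix Projectivization

lemma mulVec_ne (A : GL (Fin 2) ℝ) {v : Fin 2 → ℝ} (hv : v ≠ 0) :
    (A : Matrix (Fin 2) (Fin 2) ℝ) *ᵥ v ≠ 0 := by
  intro h
  apply hv
  have h2 : (Matrix.mulVecLin (A : Matrix (Fin 2) (Fin 2) ℝ)) v
      = (Matrix.mulVecLin (A : Matrix (Fin 2) (Fin 2) ℝ)) 0 := by
    simpa using h
  exact mulVecLin_injective A h2

lemma glMap_mk (A : GL (Fin 2) ℝ) (v : Fin 2 → ℝ) (hv : v ≠ 0) :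
    glMap A (Projectivization.mk ℝ v hv) =
      Projectivization.mk ℝ ((A : Matrix (Fin 2) (Fin 2) ℝ) *ᵥ v) (mulVec_ne A hv) := rfl

lemma glMap_inv_glMap (A : GL (Fin 2) ℝ) (t : Pone ℝ) : glMap A⁻¹ (glMap A t) = t := by
  induction t using Projectivization.ind with
  | h v hv =>
    rw [glMap_mk, glMap_mk]
    apply (Projectivization.mk_eq_mk_iff' ℝ _ _ _ _).2
    refine ⟨1, ?_⟩
    rw [one_smul, Matrix.mulVec_mulVec]
    have : ((A⁻¹ : GL (Fin 2) ℝ) : Matrix (Fin 2) (Fin 2) ℝ)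
        * (A : Matrix (Fin 2) (Fin 2) ℝ) = 1 := A.inv_mul
    rw [this, Matrix.one_mulVec]

lemma glMap_injective (A : GL (Fin 2) ℝ) : Function.Injective (glMap A) := by
  intro a b h
  have := congrArg (glMap A⁻¹) h
  rwa [glMap_inv_glMap, glMap_inv_glMap] at this

lemma vec2_cases {v : Fin 2 → ℝ} (hv : v ≠ 0) : v 0 ≠ 0 ∨ v 1 ≠ 0 := by
  by_contra h
  push_neg at h
  exact hv (funext fun i => by fin_cases i <;> simp [h.1, h.2])

lemma det_ne_of_ne {x y : Pone ℝ} (h : x ≠ y) :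
    x.rep 0 * y.rep 1 - x.rep 1 * y.rep 0 ≠ 0 := by
  intro hd
  apply h
  conv_lhs => rw [← x.mk_rep]
  conv_rhs => rw [← y.mk_rep]
  apply (Projectivization.mk_eq_mk_iff' ℝ _ _ _ _).2
  have hd' : x.rep 0 * y.rep 1 = x.rep 1 * y.rep 0 := by linarith
  rcases vec2_cases y.rep_nonzero with h0 | h1
  · refine ⟨x.rep 0 / y.rep 0, funext fun i => ?_⟩
    fin_cases i <;> simp [Pi.smul_apply] <;> field_simp <;> linarith [hd']
  · refine ⟨x.rep 1 / y.rep 1, funext fun i => ?_⟩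
    fin_cases i <;> simp [Pi.smul_apply] <;> field_simp <;> linarith [hd']

/-- The key one-dimensional normalization lemma. -/
lemma exists_gl_three (x y z : Pone ℝ) (hxy : x ≠ y) (hxz : x ≠ z) (hyz : y ≠ z) :
    ∃ A : GL (Fin 2) ℝ,
      glMap A x = pt 1 0 (Or.inl one_ne_zero) ∧
      glMap A y = pt 0 1 (Or.inr one_ne_zero) ∧
      glMap A z = pt 1 1 (Or.inl one_ne_zero) := by
  set u := x.rep with hu
  set v := y.rep with hv
  set w := z.rep with hw
  have hd : u 0 * v 1 - u 1 * v 0 ≠ 0 := det_ne_of_ne hxy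
  have hdzy : w 0 * v 1 - w 1 * v 0 ≠ 0 := det_ne_of_ne hyz.symm
  have hdxz : u 0 * w 1 - u 1 * w 0 ≠ 0 := det_ne_of_ne hxz
  set α := (w 0 * v 1 - w 1 * v 0) / (u 0 * v 1 - u 1 * v 0) with hα
  set β := (u 0 * w 1 - u 1 * w 0) / (u 0 * v 1 - u 1 * v 0) with hβ
  have hα0 : α ≠ 0 := div_ne_zero hdzy hd
  have hβ0 : β ≠ 0 := div_ne_zero hdxz hd
  have hw0 : α * u 0 + β * v 0 = w 0 := by
    rw [hα, hβ]; rw [div_mul_eq_mul_div, div_mul_eq_mul_div, ← add_div, div_eq_iff hd]; ring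
  have hw1 : α * u 1 + β * v 1 = w 1 := by
    rw [hα, hβ]; rw [div_mul_eq_mul_div, div_mul_eq_mul_div, ← add_div, div_eq_iff hd]; ring
  set M : Matrix (Fin 2) (Fin 2) ℝ := !![α * u 0, β * v 0; α * u 1, β * v 1] with hM
  have hdetM : M.det ≠ 0 := by
    rw [hM, Matrix.det_fin_two_of]
    have : α * u 0 * (β * v 1) - β * v 0 * (α * u 1)
        = α * β * (u 0 * v 1 - u 1 * v 0) := by ring
    rw [this]
    exact mul_ne_zero (mul_ne_zero hα0 hβ0) hd
  set Mgl : GL (Fin 2) ℝ := Matrix.GeneralLinearGroup.mkOfDetNeZero M hdetM with hMgl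
  have hMcoe : (Mgl : Matrix (Fin 2) (Fin 2) ℝ) = M := rfl
  refine ⟨Mgl⁻¹, ?_, ?_, ?_⟩
  · have h1 : glMap Mgl (pt 1 0 (Or.inl one_ne_zero)) = x := by
      show glMap Mgl (Projectivization.mk ℝ ![1, 0] _) = x
      rw [glMap_mk]
      conv_rhs => rw [← x.mk_rep]
      apply (Projectivization.mk_eq_mk_iff' ℝ _ _ _ _).2
      refine ⟨α, funext fun i => ?_⟩
      fin_cases i <;>
        simp [hMcoe, hM, Matrix.mulVec, dotProduct, Fin.sum_univ_two] <;>
        exact Or.inl rfl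
    rw [← h1, glMap_inv_glMap]
  · have h1 : glMap Mgl (pt 0 1 (Or.inr one_ne_zero)) = y := by
      show glMap Mgl (Projectivization.mk ℝ ![0, 1] _) = y
      rw [glMap_mk]
      conv_rhs => rw [← y.mk_rep]
      apply (Projectivization.mk_eq_mk_iff' ℝ _ _ _ _).2
      refine ⟨β, funext fun i => ?_⟩
      fin_cases i <;>
        simp [hMcoe, hM, Matrix.mulVec, dotProduct, Fin.sum_univ_two] <;>
        exact Or.inl rfl
    rw [← h1, glMap_inv_glMap]
  · have h1 : glMap Mgl (pt 1 1 (Or.inl one_ne_zero)) = z := by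
      show glMap Mgl (Projectivization.mk ℝ ![1, 1] _) = z
      rw [glMap_mk]
      conv_rhs => rw [← z.mk_rep]
      apply (Projectivization.mk_eq_mk_iff' ℝ _ _ _ _).2
      refine ⟨1, funext fun i => ?_⟩
      fin_cases i <;>
        simp [hMcoe, hM, Matrix.mulVec, dotProduct, Fin.sum_univ_two] <;>
        linarith [hw0, hw1]
    rw [← h1, glMap_inv_glMap]

lemma pone_classify {t : Pone ℝ} (h : t ≠ pt 0 1 (Or.inr one_ne_zero)) :
    ∃ μ : ℝ, t = pt 1 μ (Or.inl one_ne_zero) := by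
  have h0 : t.rep 0 ≠ 0 := by
    intro h0
    apply h
    conv_lhs => rw [← t.mk_rep]
    apply (Projectivization.mk_eq_mk_iff' ℝ _ _ _ _).2
    have h1 : t.rep 1 ≠ 0 := by
      rcases vec2_cases t.rep_nonzero with h' | h'
      · exact absurd h0 h'
      · exact h'
    refine ⟨t.rep 1, funext fun i => ?_⟩
    fin_cases i <;> simp [Pi.smul_apply, h0]
  refine ⟨t.rep 1 / t.rep 0, ?_⟩
  conv_lhs => rw [← t.mk_rep]
  apply (Projectivization.mk_eq_mk_iff' ℝ _ _ _ _).2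
  refine ⟨t.rep 0, funext fun i => ?_⟩
  fin_cases i <;> simp [Pi.smul_apply] <;> field_simp

lemma exists_smul_of_glMap_eq (A : GL (Fin 2) ℝ) (t : Pone ℝ) (w : Fin 2 → ℝ) (hw : w ≠ 0)
    (h : glMap A t = Projectivization.mk ℝ w hw) :
    ∃ a : ℝˣ, (a : ℝ) • w = (A : Matrix (Fin 2) (Fin 2) ℝ) *ᵥ t.rep := by
  rw [← t.mk_rep, glMap_mk] at h
  exact (Projectivization.mk_eq_mk_iff ℝ _ _ _ _).1 h

/-- The auxiliary bilinear form matrix `Aᵀ * [[0,1],[-1,0]] * B`. -/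
def bform (A B : Matrix (Fin 2) (Fin 2) ℝ) : Matrix (Fin 2) (Fin 2) ℝ :=
  Aᵀ * !![0, 1; -1, 0] * B

lemma bilin_eval (A B : GL (Fin 2) ℝ) (u v : Fin 2 → ℝ) :
    bform (A : Matrix (Fin 2) (Fin 2) ℝ) (B : Matrix (Fin 2) (Fin 2) ℝ) 0 0 * u 0 * v 0 +
      bform (A : Matrix (Fin 2) (Fin 2) ℝ) (B : Matrix (Fin 2) (Fin 2) ℝ) 0 1 * u 0 * v 1 +
      bform (A : Matrix (Fin 2) (Fin 2) ℝ) (B : Matrix (Fin 2) (Fin 2) ℝ) 1 0 * u 1 * v 0 +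
      bform (A : Matrix (Fin 2) (Fin 2) ℝ) (B : Matrix (Fin 2) (Fin 2) ℝ) 1 1 * u 1 * v 1
    = ((A : Matrix (Fin 2) (Fin 2) ℝ) *ᵥ u) 0 * ((B : Matrix (Fin 2) (Fin 2) ℝ) *ᵥ v) 1
      - ((A : Matrix (Fin 2) (Fin 2) ℝ) *ᵥ u) 1 * ((B : Matrix (Fin 2) (Fin 2) ℝ) *ᵥ v) 0 := by
  simp [bform, Matrix.mul_apply, Matrix.mulVec, dotProduct, Fin.sum_univ_two,
    Matrix.transpose]
  ring

end Helpers

open Matrix Projectivization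

/-- Let `p, q, r, s` be four points of `ℙ¹(ℝ) × ℙ¹(ℝ)` whose first
projections are pairwise distinct, whose second projections are pairwise distinct, and such
that no nonzero real bilinear form `c₀₀u₀v₀ + c₀₁u₀v₁ + c₁₀u₁v₀ + c₁₁u₁v₁` vanishes at all
four points. Then there are `A, B ∈ GL₂(ℝ)` and `μ₁, μ₂ ∈ ℝ ∖ {0,1}` with `μ₁ ≠ μ₂` such that
`(x, y) ↦ (A·x, B·y)` maps `p` to `([1:0],[1:0])`, `q` to `([0:1],[0:1])`, `r` to
`([1:1],[1:1])` and `s` to `([1:μ₁],[1:μ₂])`. -/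
theorem statement4 (p q r s : Pone ℝ × Pone ℝ) (hgen : GenPos p q r s) :
    ∃ (A B : GL (Fin 2) ℝ) (μ₁ μ₂ : ℝ),
      μ₁ ≠ 0 ∧ μ₁ ≠ 1 ∧ μ₂ ≠ 0 ∧ μ₂ ≠ 1 ∧ μ₁ ≠ μ₂ ∧
      mapAB A B p = (pt 1 0 (Or.inl one_ne_zero), pt 1 0 (Or.inl one_ne_zero)) ∧
      mapAB A B q = (pt 0 1 (Or.inr one_ne_zero), pt 0 1 (Or.inr one_ne_zero)) ∧
      mapAB A B r = (pt 1 1 (Or.inl one_ne_zero), pt 1 1 (Or.inl one_ne_zero)) ∧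
      mapAB A B s = (pt 1 μ₁ (Or.inl one_ne_zero), pt 1 μ₂ (Or.inl one_ne_zero)) := by
  obtain ⟨h1, h2, h3⟩ := hgen
  simp only [List.pairwise_cons, List.mem_cons, List.not_mem_nil, or_false, List.mem_singleton,
    List.Pairwise.nil, and_true, forall_eq_or_imp, forall_eq] at h1 h2
  obtain ⟨⟨hpq1, hpr1, hps1⟩, ⟨hqr1, hqs1⟩, hrs1, -⟩ := h1
  obtain ⟨⟨hpq2, hpr2, hps2⟩, ⟨hqr2, hqs2⟩, hrs2, -⟩ := h2
  obtain ⟨A, hAp, hAq, hAr⟩ := exists_gl_three p.1 q.1 r.1 hpq1 hpr1 hqr1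
  obtain ⟨B, hBp, hBq, hBr⟩ := exists_gl_three p.2 q.2 r.2 hpq2 hpr2 hqr2
  -- the image of s
  have hs1q : glMap A s.1 ≠ pt 0 1 (Or.inr one_ne_zero) := by
    rw [← hAq]; exact fun h => hqs1 (glMap_injective A h.symm)
  have hs2q : glMap B s.2 ≠ pt 0 1 (Or.inr one_ne_zero) := by
    rw [← hBq]; exact fun h => hqs2 (glMap_injective B h.symm)
  obtain ⟨μ₁, hμ₁⟩ := pone_classify hs1q
  obtain ⟨μ₂, hμ₂⟩ := pone_classify hs2q
  have hμ₁0 : μ₁ ≠ 0 := by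
    intro h; subst h
    exact hps1 (glMap_injective A (hAp.trans hμ₁.symm))
  have hμ₁1 : μ₁ ≠ 1 := by
    intro h; subst h
    exact hrs1 (glMap_injective A (hAr.trans hμ₁.symm))
  have hμ₂0 : μ₂ ≠ 0 := by
    intro h; subst h
    exact hps2 (glMap_injective B (hBp.trans hμ₂.symm))
  have hμ₂1 : μ₂ ≠ 1 := by
    intro h; subst h
    exact hrs2 (glMap_injective B (hBr.trans hμ₂.symm))
  -- μ₁ ≠ μ₂ via the bilinear form condition
  have hμμ : μ₁ ≠ μ₂ := by
    intro hμ
    subst hμ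
    obtain ⟨ap, hap⟩ := exists_smul_of_glMap_eq A p.1 ![1, 0] (vec_ne_zero (Or.inl one_ne_zero)) hAp
    obtain ⟨bp, hbp⟩ := exists_smul_of_glMap_eq B p.2 ![1, 0] (vec_ne_zero (Or.inl one_ne_zero)) hBp
    obtain ⟨aq, haq⟩ := exists_smul_of_glMap_eq A q.1 ![0, 1] (vec_ne_zero (Or.inr one_ne_zero)) hAq
    obtain ⟨bq, hbq⟩ := exists_smul_of_glMap_eq B q.2 ![0, 1] (vec_ne_zero (Or.inr one_ne_zero)) hBq
    obtain ⟨ar, har⟩ := exists_smul_of_glMap_eq A r.1 ![1, 1] (vec_ne_zero (Or.inl one_ne_zero)) hAr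
    obtain ⟨br, hbr⟩ := exists_smul_of_glMap_eq B r.2 ![1, 1] (vec_ne_zero (Or.inl one_ne_zero)) hBr
    obtain ⟨sa, has⟩ := exists_smul_of_glMap_eq A s.1 ![1, μ₁] (vec_ne_zero (Or.inl one_ne_zero)) hμ₁
    obtain ⟨bs, hbs⟩ := exists_smul_of_glMap_eq B s.2 ![1, μ₁] (vec_ne_zero (Or.inl one_ne_zero)) hμ₂
    set C : Matrix (Fin 2) (Fin 2) ℝ :=
      bform (A : Matrix (Fin 2) (Fin 2) ℝ) (B : Matrix (Fin 2) (Fin 2) ℝ) with hC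
    have hvan : ∀ P ∈ [p, q, r, s],
        C 0 0 * P.1.rep 0 * P.2.rep 0 + C 0 1 * P.1.rep 0 * P.2.rep 1 +
          C 1 0 * P.1.rep 1 * P.2.rep 0 + C 1 1 * P.1.rep 1 * P.2.rep 1 = 0 := by
      intro P hP
      simp only [List.mem_cons, List.not_mem_nil, or_false] at hP
      rcases hP with rfl | rfl | rfl | rfl
      · rw [hC, bilin_eval, ← hap, ← hbp]; simp
      · rw [hC, bilin_eval, ← haq, ← hbq]; simp
      · rw [hC, bilin_eval, ← har, ← hbr]; simp
      · rw [hC, bilin_eval, ← has, ← hbs]; simp; ring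
    obtain ⟨hc00, hc01, hc10, hc11⟩ := h3 (C 0 0) (C 0 1) (C 1 0) (C 1 1) hvan
    have hkey := bilin_eval A B
      (((A⁻¹ : GL (Fin 2) ℝ) : Matrix (Fin 2) (Fin 2) ℝ) *ᵥ ![1, 0])
      (((B⁻¹ : GL (Fin 2) ℝ) : Matrix (Fin 2) (Fin 2) ℝ) *ᵥ ![0, 1])
    rw [← hC] at hkey
    rw [hc00, hc01, hc10, hc11] at hkey
    rw [Matrix.mulVec_mulVec, Matrix.mulVec_mulVec] at hkey
    have hA1 : (A : Matrix (Fin 2) (Fin 2) ℝ) * ((A⁻¹ : GL (Fin 2) ℝ) : Matrix (Fin 2) (Fin 2) ℝ)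
        = 1 := A.mul_inv
    have hB1 : (B : Matrix (Fin 2) (Fin 2) ℝ) * ((B⁻¹ : GL (Fin 2) ℝ) : Matrix (Fin 2) (Fin 2) ℝ)
        = 1 := B.mul_inv
    rw [hA1, hB1, Matrix.one_mulVec, Matrix.one_mulVec] at hkey
    simp at hkey
  refine ⟨A, B, μ₁, μ₂, hμ₁0, hμ₁1, hμ₂0, hμ₂1, hμμ, ?_, ?_, ?_, ?_⟩ <;>
    exact Prod.ext (by assumption) (by assumption)
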